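/- Let (X,d) be a compact metric space, let (x_i) and (x'_i) be sequences of points of X, and let (p_i) be a fast growing sequence. Let z = z((p_i),(x_i)) and z' = z((p_i),(x'_i)) be the corresponding Oxtoby sequences and suppose both L((x_i)) and L((x'_i)) contain at least two points. Then for every conjugacy f between the systems (O̅(z),S) and (O̅(z'),S), there exists m ∈ ℤ with f(z) = S^m z'. -/

import Mathlib

open Filter Topology

section Defs

variable {X : Type*}

/-- The shift by `m`: `(shiftZ m z) n = z (n + m)`, so `shiftZ 1` is the left shift `S`
and `shiftZ m = S^m`. -/
def shiftZ (m : ℤ) (z : ℤ → X) : ℤ → X := fun n => z (n + m)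

/-- `Per_p(z)`: the set of positions `n` such that `z m = z n` for all `m ≡ n (mod p)`. -/
def PerSet (p : ℕ) (z : ℤ → X) : Set ℤ :=
  {n : ℤ | ∀ m : ℤ, (p : ℤ) ∣ m - n → z m = z n}

/-- `Per(z) = ⋃_{p ≥ 1} Per_p(z)`. -/
def PerFull (z : ℤ → X) : Set ℤ := {n : ℤ | ∃ p : ℕ, 1 ≤ p ∧ n ∈ PerSet p z}

/-- A Toeplitz sequence: every position is periodic. -/
def IsToeplitz (z : ℤ → X) : Prop := ∀ n : ℤ, n ∈ PerFull z

/-- A non-periodic sequence: `S^m z ≠ z` for all `m ≠ 0`. -/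
def NonPeriodicSeq (z : ℤ → X) : Prop := ∀ m : ℤ, m ≠ 0 → shiftZ m z ≠ z

/-- `u` and `v` have the same `p`-skeleton. -/
def SamePSkeleton (p : ℕ) (u v : ℤ → X) : Prop :=
  PerSet p u = PerSet p v ∧ ∀ n ∈ PerSet p u, u n = v n

/-- A period structure of a (non-periodic) Toeplitz sequence `z`. -/
def IsPeriodStructure (p : ℕ → ℕ) (z : ℤ → X) : Prop :=
  (∀ i, 1 ≤ p i) ∧
  (∀ i q, 1 ≤ q → q < p i → PerSet q z ≠ PerSet (p i) z) ∧
  (∀ i, p i ∣ p (i + 1)) ∧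
  (∀ n : ℤ, ∃ i, n ∈ PerSet (p i) z)

/-- A fast growing sequence of positive integers. -/
def FastGrowing (p : ℕ → ℕ) : Prop :=
  p 0 = 1 ∧ (∀ i, p i ∣ p (i + 1)) ∧ 3 ≤ p 1 ∧ ∀ i, 3 * p i ≤ p (i + 1)

/-- `oxDefined p i` is the set of positions of the Oxtoby sequence that are filled in
after step `i` of the inductive construction (step `i+1` fills, for each `k ≡ 0` or
`-1 (mod p_{i+1}/p_i)`, the still-empty positions `J(i,k)` of the block
`[k p_i, (k+1) p_i)`). -/
def oxDefined (p : ℕ → ℕ) : ℕ → Set ℤ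
  | 0 => ∅
  | i + 1 =>
      oxDefined p i ∪
        {n : ℤ | ∃ k : ℤ,
          (((p (i + 1) / p i : ℕ) : ℤ) ∣ k ∨ ((p (i + 1) / p i : ℕ) : ℤ) ∣ (k + 1)) ∧
          k * (p i : ℤ) ≤ n ∧ n < (k + 1) * (p i : ℤ) ∧ n ∉ oxDefined p i}

/-- `J(i,k)`: the set of positions in `[k p_i, (k+1) p_i)` still undefined after step `i`. -/
def oxJ (p : ℕ → ℕ) (i : ℕ) (k : ℤ) : Set ℤ :=
  {n : ℤ | k * (p i : ℤ) ≤ n ∧ n < (k + 1) * (p i : ℤ) ∧ n ∉ oxDefined p i}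

/-- The Oxtoby sequence `z((p_i),(x_i))`: position `n` receives the value `x_i` where `i`
is the first step after which `n` is defined. -/
noncomputable def oxtoby (p : ℕ → ℕ) (x : ℕ → X) : ℤ → X :=
  fun n => x (sInf {i : ℕ | n ∈ oxDefined p i})

/-- The reverse of a bi-infinite sequence: `x⁻¹(n) = x(-n)`. -/
def revSeq (z : ℤ → X) : ℤ → X := fun n => z (-n)

/-- `[n0, n1]` is a maximal `p`-periodic block in `x`. -/
def IsMaxPeriodicBlock (p : ℕ) (x : ℤ → X) (n0 n1 : ℤ) : Prop :=
  n0 ≤ n1 ∧ Set.Icc n0 n1 ⊆ PerSet p x ∧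
    ∀ n0' n1' : ℤ, n0' ≤ n0 → n1 ≤ n1' → Set.Icc n0' n1' ⊆ PerSet p x →
      n0' = n0 ∧ n1' = n1

variable [TopologicalSpace X]

/-- The orbit closure of `z` in `X^ℤ` with the product topology. -/
def orbitClosure (z : ℤ → X) : Set (ℤ → X) :=
  closure {y : ℤ → X | ∃ m : ℤ, y = shiftZ m z}

/-- The ω-limit set of a sequence: all limits of convergent subsequences. -/
def omegaLimitSet (x : ℕ → X) : Set X :=
  {a : X | ∃ φ : ℕ → ℕ, StrictMono φ ∧ Tendsto (x ∘ φ) atTop (𝓝 a)}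

/-- Two sequences have the same topological type if exactly the same subsequences
converge. -/
def SameTopType {Y : Type*} [TopologicalSpace Y] (x : ℕ → X) (y : ℕ → Y) : Prop :=
  ∀ φ : ℕ → ℕ, StrictMono φ →
    ((∃ a, Tendsto (x ∘ φ) atTop (𝓝 a)) ↔ (∃ a, Tendsto (y ∘ φ) atTop (𝓝 a)))

/-- `f` is a conjugacy between the shift-invariant sets `A` and `B`: a homeomorphism
from `A` onto `B` commuting with the shift. -/
def IsConjugacy (A B : Set (ℤ → X)) (f : (ℤ → X) → (ℤ → X)) : Prop :=
  Set.MapsTo f A B ∧ ContinuousOn f A ∧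
    (∃ g : (ℤ → X) → (ℤ → X), Set.MapsTo g B A ∧ ContinuousOn g B ∧
      (∀ a ∈ A, g (f a) = a) ∧ (∀ b ∈ B, f (g b) = b)) ∧
    ∀ a ∈ A, f (shiftZ 1 a) = shiftZ 1 (f a)

/-- The `m`-th iterate (for `m : ℤ`) of a self-homeomorphism. -/
def iterZ {Y : Type*} [TopologicalSpace Y] (f : Y ≃ₜ Y) (m : ℤ) (a : Y) : Y :=
  ((f.toEquiv ^ m : Equiv.Perm Y)) a

end Defs

namespace Ox

variable {p : ℕ → ℕ}

/-- the ratio `p (j+1) / p j`. -/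
def q (p : ℕ → ℕ) (j : ℕ) : ℕ := p (j + 1) / p j

lemma ppos (hp : FastGrowing p) : ∀ i, 0 < p i := by
  intro i
  induction i with
  | zero => simp [hp.1]
  | succ i ih => calc 0 < 3 * p i := by omega
                 _ ≤ p (i+1) := hp.2.2.2 i

lemma qmul (hp : FastGrowing p) (j : ℕ) : p (j + 1) = p j * q p j :=
  by rw [q, Nat.mul_div_cancel' (hp.2.1 j)]

lemma q3 (hp : FastGrowing p) (j : ℕ) : 3 ≤ q p j := by
  have h1 := hp.2.2.2 j
  have h2 := qmul hp j
  have h3 := ppos hp j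
  nlinarith [Nat.lt_irrefl (p j)]

lemma pdvd (hp : FastGrowing p) {i j : ℕ} (h : i ≤ j) : p i ∣ p j := by
  induction j with
  | zero => simp_all
  | succ j ih =>
    rcases Nat.lt_or_ge i (j+1) with h' | h'
    · exact (ih (by omega)).trans (hp.2.1 j)
    · have : i = j + 1 := by omega
      simp [this]

lemma plarge (hp : FastGrowing p) (N : ℕ) : ∃ i, N < p i := by
  have key : ∀ i, i + 1 ≤ p i := by
    intro i
    induction i with
    | zero => simp [hp.1]
    | succ i ih => have := hp.2.2.2 i; omega
  exact ⟨N, key N⟩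

/-- the boundary-digit condition at scale `j`. -/
def Bd (p : ℕ → ℕ) (j : ℕ) (n : ℤ) : Prop :=
  ((q p j : ℕ) : ℤ) ∣ n / (p j : ℤ) ∨ ((q p j : ℕ) : ℤ) ∣ (n / (p j : ℤ) + 1)

lemma ediv_eq_of (a b k : ℤ) (hb : 0 < b) (h1 : k * b ≤ a) (h2 : a < (k+1) * b) :
    a / b = k := by
  have hle : k ≤ a / b := by
    rw [Int.le_ediv_iff_mul_le hb]; exact h1
  have hlt : a / b < k + 1 := by
    rw [Int.ediv_lt_iff_lt_mul hb]; exact h2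
  omega

lemma oxDefined_eq (hp : FastGrowing p) :
    ∀ i, oxDefined p i = {n : ℤ | ∃ j, j < i ∧ Bd p j n} := by
  intro i
  induction i with
  | zero => simp [oxDefined]
  | succ i ih =>
    ext n
    have hpi : (0:ℤ) < (p i : ℤ) := by exact_mod_cast ppos hp i
    constructor
    · rintro (h | ⟨k, hk, hk1, hk2, -⟩)
      · rw [ih] at h
        obtain ⟨j, hj, hb⟩ := h
        exact ⟨j, by omega, hb⟩
      · refine ⟨i, by omega, ?_⟩
        have : n / (p i : ℤ) = k := ediv_eq_of n _ k hpi hk1 hk2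
        unfold Bd q
        rw [this]
        exact hk
    · rintro ⟨j, hj, hb⟩
      rcases Nat.lt_or_ge j i with h' | h'
      · left; rw [ih]; exact ⟨j, h', hb⟩
      · have hji : j = i := by omega
        subst hji
        by_cases hmem : n ∈ oxDefined p j
        · left; exact hmem
        · right
          refine ⟨n / (p j : ℤ), ?_, ?_, ?_, hmem⟩
          · exact hb
          · exact Int.ediv_mul_le n (by positivity)
          · have := Int.emod_lt_of_pos n (show (0:ℤ) < (p j : ℤ) by exact_mod_cast ppos hp j)
            have h2 := Int.mul_ediv_add_emod n (p j)
            nlinarith [Int.emod_nonneg n (show ((p j : ℕ):ℤ) ≠ 0 by positivity)]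

end Ox

namespace Ox2
open Ox

variable {p : ℕ → ℕ}

lemma castdvd {a b : ℕ} (h : a ∣ b) : (a : ℤ) ∣ (b : ℤ) := Int.natCast_dvd_natCast.mpr h

lemma Bd_congr (hp : FastGrowing p) {j : ℕ} {m n : ℤ}
    (h : ((p (j+1) : ℕ) : ℤ) ∣ m - n) : Bd p j m ↔ Bd p j n := by
  obtain ⟨t, ht⟩ := h
  have hm : m = n + (t * (q p j : ℤ)) * (p j : ℤ) := by
    have : ((p (j+1) : ℕ) : ℤ) = (p j : ℤ) * (q p j : ℤ) := by
      rw [qmul hp j]; push_cast; ring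
    rw [this] at ht; linarith [ht]
  have hpj : ((p j : ℕ) : ℤ) ≠ 0 := by
    have := ppos hp j; positivity
  have hdiv : m / (p j : ℤ) = n / (p j : ℤ) + t * (q p j : ℤ) := by
    rw [hm, Int.add_mul_ediv_right _ _ hpj]
  unfold Bd
  rw [hdiv]
  have hQ : ((q p j : ℕ) : ℤ) ∣ t * (q p j : ℤ) := Dvd.intro_left t rfl
  have e2 : n / (p j : ℤ) + t * (q p j : ℤ) + 1 = (n / (p j : ℤ) + 1) + t * (q p j : ℤ) := by
    ring
  have dvdshift : ∀ v : ℤ, (((q p j : ℕ) : ℤ) ∣ v + t * (q p j : ℤ)) ↔ ((q p j : ℕ) : ℤ) ∣ v := by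
    intro v
    constructor
    · intro h'
      have := h'.sub hQ
      simpa using this
    · intro h'
      exact h'.add hQ
  rw [e2, dvdshift, dvdshift]

lemma mem_congr (hp : FastGrowing p) {i : ℕ} {m n : ℤ}
    (h : ((p i : ℕ) : ℤ) ∣ m - n) : m ∈ oxDefined p i ↔ n ∈ oxDefined p i := by
  simp only [oxDefined_eq hp, Set.mem_setOf_eq]
  constructor <;> rintro ⟨j, hj, hb⟩ <;> refine ⟨j, hj, ?_⟩
  · exact (Bd_congr hp ((castdvd (pdvd hp (by omega : j + 1 ≤ i))).trans h)).mp hb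
  · exact (Bd_congr hp ((castdvd (pdvd hp (by omega : j + 1 ≤ i))).trans h)).mpr hb

lemma oxDefined_mono (hp : FastGrowing p) {i j : ℕ} (h : i ≤ j) :
    oxDefined p i ⊆ oxDefined p j := by
  simp only [oxDefined_eq hp]
  rintro n ⟨k, hk, hb⟩
  exact ⟨k, by omega, hb⟩

lemma total (hp : FastGrowing p) (n : ℤ) : ∃ i, n ∈ oxDefined p i := by
  obtain ⟨j, hj⟩ := plarge hp n.natAbs
  have hpj : (0:ℤ) < (p j : ℤ) := by exact_mod_cast ppos hp j
  have habs : n < (p j : ℤ) ∧ -(p j : ℤ) ≤ n := by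
    constructor
    · calc n ≤ |n| := le_abs_self n
        _ = (n.natAbs : ℤ) := by rw [Int.abs_eq_natAbs]
        _ < (p j : ℤ) := by exact_mod_cast hj
    · have : -n ≤ |n| := neg_le_abs n
      have h2 : |n| = (n.natAbs : ℤ) := by rw [Int.abs_eq_natAbs]
      have h3 : (n.natAbs : ℤ) < (p j : ℤ) := by exact_mod_cast hj
      linarith
  refine ⟨j + 1, ?_⟩
  rw [oxDefined_eq hp]
  refine ⟨j, by omega, ?_⟩
  rcases le_or_gt 0 n with hn | hn
  · left
    rw [Int.ediv_eq_zero_of_lt hn habs.1]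
    exact dvd_zero _
  · right
    have : n / (p j : ℤ) = -1 := by
      apply ediv_eq_of n _ (-1) hpj <;> [linarith; linarith]
    rw [this]
    simp

/-- the first level at which `n` is defined. -/
noncomputable def lev (p : ℕ → ℕ) (n : ℤ) : ℕ := sInf {i | n ∈ oxDefined p i}

lemma oxtoby_apply {X : Type*} (x : ℕ → X) (n : ℤ) : oxtoby p x n = x (lev p n) := rfl

lemma lev_mem (hp : FastGrowing p) (n : ℤ) : n ∈ oxDefined p (lev p n) :=
  Nat.sInf_mem (total hp n)

lemma lev_congr (hp : FastGrowing p) {i : ℕ} {m n : ℤ}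
    (h : ((p i : ℕ) : ℤ) ∣ m - n) (hn : n ∈ oxDefined p i) : lev p m = lev p n := by
  have hm : m ∈ oxDefined p i := (mem_congr hp h).mpr hn
  have key : ∀ j ≤ i, (m ∈ oxDefined p j ↔ n ∈ oxDefined p j) := by
    intro j hj
    exact mem_congr hp ((castdvd (pdvd hp hj)).trans h)
  have h1 : lev p m ≤ i := Nat.sInf_le hm
  have h2 : lev p n ≤ i := Nat.sInf_le hn
  apply le_antisymm
  · exact Nat.sInf_le ((key _ h2).mpr (lev_mem hp n))
  · exact Nat.sInf_le ((key _ h1).mp (lev_mem hp m))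

lemma oxtoby_congr {X : Type*} (hp : FastGrowing p) (x : ℕ → X) {i : ℕ} {m n : ℤ}
    (h : ((p i : ℕ) : ℤ) ∣ m - n) (hn : n ∈ oxDefined p i) :
    oxtoby p x m = oxtoby p x n := by
  rw [oxtoby_apply, oxtoby_apply, lev_congr hp h hn]

lemma lev_eq_of (hp : FastGrowing p) {i : ℕ} {n : ℤ}
    (h1 : n ∈ oxDefined p (i+1)) (h2 : n ∉ oxDefined p i) : lev p n = i + 1 := by
  have ha : lev p n ≤ i + 1 := Nat.sInf_le h1
  have hb : ¬ lev p n ≤ i := by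
    intro hle
    exact h2 (oxDefined_mono hp hle (lev_mem hp n))
  omega

end Ox2

namespace Ox3
open Ox Ox2

variable {p : ℕ → ℕ}

/-- A normalized phase: a compatible system of residues mod `p i`. -/
structure NPhase (p : ℕ → ℕ) where
  c : ℕ → ℤ
  lb : ∀ i, 0 ≤ c i
  ub : ∀ i, c i < ((p i : ℕ) : ℤ)
  compat : ∀ i, ((p i : ℕ) : ℤ) ∣ c (i+1) - c i

lemma NPhase.c0 (hp : FastGrowing p) (u : NPhase p) : u.c 0 = 0 := by
  have h1 := u.lb 0
  have h2 := u.ub 0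
  rw [hp.1] at h2
  omega

lemma NPhase.compat' (hp : FastGrowing p) (u : NPhase p) {i j : ℕ} (h : i ≤ j) :
    ((p i : ℕ) : ℤ) ∣ u.c j - u.c i := by
  induction j with
  | zero => have : i = 0 := by omega
            subst this; simp
  | succ j ih =>
    rcases Nat.lt_or_ge i (j+1) with h' | h'
    · have d1 := ih (by omega)
      have d2 : ((p i : ℕ) : ℤ) ∣ u.c (j+1) - u.c j :=
        (castdvd (pdvd hp (by omega : i ≤ j))).trans (u.compat j)
      have := d2.add d1
      simpa using this
    · have : i = j + 1 := by omega
      subst this; simp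

/-- the digit of a normalized phase at scale `i`. -/
def dig (u : NPhase p) (i : ℕ) : ℤ := (u.c (i+1) - u.c i) / ((p i : ℕ) : ℤ)

lemma dig_mul (u : NPhase p) (i : ℕ) :
    dig u i * ((p i : ℕ) : ℤ) = u.c (i+1) - u.c i :=
  Int.ediv_mul_cancel (u.compat i)

lemma dig_nonneg (hp : FastGrowing p) (u : NPhase p) (i : ℕ) : 0 ≤ dig u i := by
  have h := dig_mul u i
  have h1 := u.lb (i+1)
  have h2 := u.ub i
  have hpi : (0:ℤ) < ((p i : ℕ) : ℤ) := by exact_mod_cast ppos hp i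
  by_contra hneg
  push_neg at hneg
  have : dig u i ≤ -1 := by omega
  nlinarith

lemma dig_lt (hp : FastGrowing p) (u : NPhase p) (i : ℕ) : dig u i < ((q p i : ℕ) : ℤ) := by
  have h := dig_mul u i
  have h1 := u.lb i
  have h2 := u.ub (i+1)
  have hpi : (0:ℤ) < ((p i : ℕ) : ℤ) := by exact_mod_cast ppos hp i
  have hq : ((p (i+1) : ℕ) : ℤ) = ((p i : ℕ) : ℤ) * ((q p i : ℕ) : ℤ) := by
    rw [qmul hp i]; push_cast; ring
  by_contra hge
  push_neg at hge
  nlinarith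

lemma dig_c_succ (u : NPhase p) (i : ℕ) :
    u.c (i+1) = u.c i + dig u i * ((p i : ℕ) : ℤ) := by
  have := dig_mul u i; omega

/-- boundary digit forces membership in the defined set. -/
lemma mem_of_dig_boundary (hp : FastGrowing p) (u : NPhase p) (i : ℕ)
    (h : dig u i = 0 ∨ dig u i = ((q p i : ℕ) : ℤ) - 1) :
    u.c (i+1) ∈ oxDefined p (i+1) := by
  have hpi : (0:ℤ) < ((p i : ℕ) : ℤ) := by exact_mod_cast ppos hp i
  have hdiv : u.c (i+1) / ((p i : ℕ) : ℤ) = dig u i := by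
    apply ediv_eq_of _ _ _ hpi
    · have := u.lb i; have := dig_c_succ u i; omega
    · have := u.ub i; have := dig_c_succ u i; nlinarith
  rw [oxDefined_eq hp]
  refine ⟨i, by omega, ?_⟩
  unfold Bd
  rw [hdiv]
  rcases h with h | h
  · left; rw [h]; exact dvd_zero _
  · right; rw [h]; simp

lemma not_dvd_of_between {Q v : ℤ} (h1 : 0 < v) (h2 : v < Q) : ¬ Q ∣ v := by
  intro h
  have := Int.le_of_dvd h1 h
  omega

/-- an all-interior phase avoids every defined set. -/
lemma not_mem_of_interior (hp : FastGrowing p) (u : NPhase p)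
    (hin : ∀ j, 1 ≤ dig u j ∧ dig u j ≤ ((q p j : ℕ) : ℤ) - 2) :
    ∀ i, u.c i ∉ oxDefined p i := by
  intro i hmem
  rw [oxDefined_eq hp] at hmem
  obtain ⟨j, hj, hb⟩ := hmem
  have hcong : ((p (j+1) : ℕ) : ℤ) ∣ u.c i - u.c (j+1) := u.compat' hp (by omega)
  have hb' : Bd p j (u.c (j+1)) := (Bd_congr hp hcong).mp hb
  have hpj : (0:ℤ) < ((p j : ℕ) : ℤ) := by exact_mod_cast ppos hp j
  have hdiv : u.c (j+1) / ((p j : ℕ) : ℤ) = dig u j := by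
    apply ediv_eq_of _ _ _ hpj
    · have := u.lb j; have := dig_c_succ u j; omega
    · have := u.ub j; have := dig_c_succ u j; nlinarith
  have hq3 : (3 : ℤ) ≤ ((q p j : ℕ) : ℤ) := by exact_mod_cast q3 hp j
  unfold Bd at hb'
  rw [hdiv] at hb'
  have h1 := (hin j).1
  have h2 := (hin j).2
  rcases hb' with h | h
  · exact not_dvd_of_between (by omega) (by omega) h
  · exact not_dvd_of_between (by omega) (by omega) h

section Sum
open Ox Ox2

variable {p : ℕ → ℕ}

lemma pcast_pos (hp : FastGrowing p) (i : ℕ) : (0:ℤ) < ((p i : ℕ) : ℤ) := by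
  exact_mod_cast ppos hp i

lemma modeq_emod (hp : FastGrowing p) (i : ℕ) (a : ℤ) :
    ((p i : ℕ) : ℤ) ∣ a % ((p (i+1) : ℕ) : ℤ) - a := by
  have h1 : a % ((p (i+1) : ℕ) : ℤ) % ((p i : ℕ) : ℤ) = a % ((p i : ℕ) : ℤ) :=
    Int.emod_emod_of_dvd a (castdvd (hp.2.1 i))
  have := Int.emod_emod_of_dvd a (castdvd (hp.2.1 i))
  exact Int.ModEq.dvd (Int.ModEq.symm this)

/-- sum of two normalized phases, normalized. -/
def psum (hp : FastGrowing p) (u v : NPhase p) : NPhase p where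
  c i := (u.c i + v.c i) % ((p i : ℕ) : ℤ)
  lb i := Int.emod_nonneg _ (ne_of_gt (pcast_pos hp i))
  ub i := Int.emod_lt_of_pos _ (pcast_pos hp i)
  compat i := by
    have h1 : ((p i : ℕ) : ℤ) ∣ (u.c (i+1) + v.c (i+1)) % ((p (i+1) : ℕ) : ℤ)
        - (u.c (i+1) + v.c (i+1)) := modeq_emod hp i _
    have h2 : ((p i : ℕ) : ℤ) ∣ (u.c (i+1) + v.c (i+1)) - (u.c i + v.c i) := by
      have := (u.compat i).add (v.compat i)
      have e : u.c (i+1) - u.c i + (v.c (i+1) - v.c i)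
          = (u.c (i+1) + v.c (i+1)) - (u.c i + v.c i) := by ring
      rwa [e] at this
    have h3 : ((p i : ℕ) : ℤ) ∣ (u.c i + v.c i) - (u.c i + v.c i) % ((p i : ℕ) : ℤ) := by
      have := Int.emod_emod_of_dvd (u.c i + v.c i) (dvd_refl ((p i : ℕ) : ℤ))
      exact Int.ModEq.dvd (by
        unfold Int.ModEq
        simp [Int.emod_emod_of_dvd])
    have := (h1.add h2).add h3
    have e : (u.c (i+1) + v.c (i+1)) % ((p (i+1) : ℕ) : ℤ) - (u.c (i+1) + v.c (i+1))
        + ((u.c (i+1) + v.c (i+1)) - (u.c i + v.c i))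
        + ((u.c i + v.c i) - (u.c i + v.c i) % ((p i : ℕ) : ℤ))
        = (u.c (i+1) + v.c (i+1)) % ((p (i+1) : ℕ) : ℤ)
          - (u.c i + v.c i) % ((p i : ℕ) : ℤ) := by ring
    rwa [e] at this

/-- the carry of the sum at scale `i`. -/
def carry (u v : NPhase p) (i : ℕ) : ℤ := (u.c i + v.c i) / ((p i : ℕ) : ℤ)

lemma carry_zero_one (hp : FastGrowing p) (u v : NPhase p) (i : ℕ) :
    carry u v i = 0 ∨ carry u v i = 1 := by
  have h1 := u.lb i; have h2 := u.ub i
  have h3 := v.lb i; have h4 := v.ub i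
  have hpi := pcast_pos hp i
  have e1 : 0 ≤ carry u v i := Int.ediv_nonneg (by omega) (by omega)
  have e2 : carry u v i < 2 := by
    unfold carry
    rw [Int.ediv_lt_iff_lt_mul hpi]
    omega
  omega

lemma carry_zero (hp : FastGrowing p) (u v : NPhase p) : carry u v 0 = 0 := by
  unfold carry
  rw [u.c0 hp, v.c0 hp]
  simp

lemma psum_c (hp : FastGrowing p) (u v : NPhase p) (i : ℕ) :
    (psum hp u v).c i = u.c i + v.c i - carry u v i * ((p i : ℕ) : ℤ) := by
  show (u.c i + v.c i) % ((p i : ℕ) : ℤ) = _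
  rw [Int.emod_def]
  unfold carry
  ring

/-- the addition-with-carry identity for digits. -/
lemma dig_psum (hp : FastGrowing p) (u v : NPhase p) (i : ℕ) :
    dig (psum hp u v) i
      = dig u i + dig v i + carry u v i - carry u v (i+1) * ((q p i : ℕ) : ℤ) := by
  have hpi := pcast_pos hp i
  apply mul_right_cancel₀ (b := ((p i : ℕ) : ℤ)) (ne_of_gt hpi)
  rw [dig_mul]
  rw [psum_c hp u v (i+1), psum_c hp u v i]
  have hu := dig_mul u i
  have hv := dig_mul v i
  have hq : ((p (i+1) : ℕ) : ℤ) = ((p i : ℕ) : ℤ) * ((q p i : ℕ) : ℤ) := by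
    rw [qmul hp i]; push_cast; ring
  rw [hq]
  nlinarith [hu, hv]

/-- the normalized phase of an integer. -/
def intPhase (hp : FastGrowing p) (m : ℤ) : NPhase p where
  c i := m % ((p i : ℕ) : ℤ)
  lb i := Int.emod_nonneg _ (ne_of_gt (pcast_pos hp i))
  ub i := Int.emod_lt_of_pos _ (pcast_pos hp i)
  compat i := by
    have h1 := modeq_emod hp i m
    have h3 : ((p i : ℕ) : ℤ) ∣ m - m % ((p i : ℕ) : ℤ) :=
      ⟨m / ((p i : ℕ) : ℤ), by rw [Int.emod_def]; ring⟩
    have := h1.add h3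
    have e : m % ((p (i+1) : ℕ) : ℤ) - m + (m - m % ((p i : ℕ) : ℤ))
        = m % ((p (i+1) : ℕ) : ℤ) - m % ((p i : ℕ) : ℤ) := by ring
    rwa [e] at this

lemma intPhase_dvd (hp : FastGrowing p) (m : ℤ) (i : ℕ) :
    ((p i : ℕ) : ℤ) ∣ (intPhase hp m).c i - m := by
  show ((p i : ℕ) : ℤ) ∣ m % ((p i : ℕ) : ℤ) - m
  rw [Int.emod_def]
  exact ⟨-(m / ((p i : ℕ) : ℤ)), by ring⟩

/-- uniqueness of normalized residues. -/
lemma res_unique {P a b : ℤ} (hP : 0 < P) (ha : 0 ≤ a) (ha' : a < P)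
    (hb : 0 ≤ b) (hb' : b < P) (h : P ∣ a - b) : a = b := by
  obtain ⟨t, ht⟩ := h
  rcases lt_trichotomy t 0 with h' | h' | h'
  · have : t ≤ -1 := by omega
    nlinarith
  · subst h'
    simp at ht
    omega
  · have : 1 ≤ t := by omega
    nlinarith

/-- a phase congruent to an integer `m` is the normalized phase of `m`. -/
lemma eq_intPhase (hp : FastGrowing p) (u : NPhase p) (m : ℤ)
    (h : ∀ i, ((p i : ℕ) : ℤ) ∣ u.c i - m) : ∀ i, u.c i = (intPhase hp m).c i := by
  intro i
  have h2 := intPhase_dvd hp m i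
  refine res_unique (pcast_pos hp i) (u.lb i) (u.ub i) ((intPhase hp m).lb i)
    ((intPhase hp m).ub i) ?_
  have := (h i).sub h2
  have e : u.c i - m - ((intPhase hp m).c i - m) = u.c i - (intPhase hp m).c i := by ring
  rwa [e] at this

lemma intPhase_c_of_nonneg (hp : FastGrowing p) {m : ℤ} (hm : 0 ≤ m) {j : ℕ}
    (h : m < ((p j : ℕ) : ℤ)) : (intPhase hp m).c j = m := by
  show m % ((p j : ℕ) : ℤ) = m
  exact Int.emod_eq_of_lt hm h

lemma intPhase_c_of_neg (hp : FastGrowing p) {m : ℤ} (hm : m < 0) {j : ℕ}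
    (h : -m ≤ ((p j : ℕ) : ℤ)) : (intPhase hp m).c j = m + ((p j : ℕ) : ℤ) := by
  show m % ((p j : ℕ) : ℤ) = m + ((p j : ℕ) : ℤ)
  have hpj := pcast_pos hp j
  have : (m + ((p j : ℕ) : ℤ)) % ((p j : ℕ) : ℤ) = m % ((p j : ℕ) : ℤ) := by
    have := Int.add_mul_emod_self_left (a := m) (b := ((p j : ℕ) : ℤ)) (c := 1)
    simpa using this
  rw [← this]
  exact Int.emod_eq_of_lt (by omega) (by omega)

lemma pmono (hp : FastGrowing p) {i j : ℕ} (h : i ≤ j) : p i ≤ p j :=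
  Nat.le_of_dvd (ppos hp j) (pdvd hp h)

lemma dig_intPhase_of_nonneg (hp : FastGrowing p) {m : ℤ} (hm : 0 ≤ m) {j : ℕ}
    (h : m < ((p j : ℕ) : ℤ)) : dig (intPhase hp m) j = 0 := by
  have h1 : (intPhase hp m).c j = m := intPhase_c_of_nonneg hp hm h
  have h2 : (intPhase hp m).c (j+1) = m := by
    apply intPhase_c_of_nonneg hp hm
    have : ((p j : ℕ) : ℤ) ≤ ((p (j+1) : ℕ) : ℤ) := by
      exact_mod_cast pmono hp (by omega : j ≤ j + 1)
    omega
  unfold dig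
  rw [h1, h2]
  simp

lemma dig_intPhase_of_neg (hp : FastGrowing p) {m : ℤ} (hm : m < 0) {j : ℕ}
    (h : -m ≤ ((p j : ℕ) : ℤ)) : dig (intPhase hp m) j = ((q p j : ℕ) : ℤ) - 1 := by
  have h1 : (intPhase hp m).c j = m + ((p j : ℕ) : ℤ) := intPhase_c_of_neg hp hm h
  have hle : ((p j : ℕ) : ℤ) ≤ ((p (j+1) : ℕ) : ℤ) := by
    exact_mod_cast pmono hp (by omega : j ≤ j + 1)
  have h2 : (intPhase hp m).c (j+1) = m + ((p (j+1) : ℕ) : ℤ) :=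
    intPhase_c_of_neg hp hm (by omega)
  have hq : ((p (j+1) : ℕ) : ℤ) = ((p j : ℕ) : ℤ) * ((q p j : ℕ) : ℤ) := by
    rw [qmul hp j]; push_cast; ring
  have hpj := pcast_pos hp j
  apply mul_right_cancel₀ (b := ((p j : ℕ) : ℤ)) (ne_of_gt hpj)
  rw [dig_mul]
  rw [h1, h2, hq]
  ring

lemma dvd_sub_swap {P a b : ℤ} (h : P ∣ a - b) : P ∣ b - a := by
  obtain ⟨t, ht⟩ := h
  exact ⟨-t, by rw [mul_neg]; omega⟩

/-- a phase whose digits are eventually `0` is integer. -/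
lemma int_of_tail_zero (hp : FastGrowing p) (u : NPhase p) (J : ℕ)
    (h : ∀ j, J ≤ j → dig u j = 0) : ∃ m, ∀ i, ((p i : ℕ) : ℤ) ∣ u.c i - m := by
  have key : ∀ k, J ≤ k → u.c k = u.c J := by
    intro k hk
    induction k with
    | zero => have : J = 0 := by omega
              rw [this]
    | succ k ih =>
      rcases Nat.lt_or_ge J (k+1) with h' | h'
      · have hik := ih (by omega)
        rw [dig_c_succ u k, h k (by omega), hik]
        ring
      · have : J = k + 1 := by omega
        rw [this]
  refine ⟨u.c J, fun i => ?_⟩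
  rcases le_or_gt J i with h' | h'
  · rw [key i h']
    simp
  · exact dvd_sub_swap (u.compat' hp (by omega))

/-- a phase whose digits are eventually maximal is integer. -/
lemma int_of_tail_max (hp : FastGrowing p) (u : NPhase p) (J : ℕ)
    (h : ∀ j, J ≤ j → dig u j = ((q p j : ℕ) : ℤ) - 1) :
    ∃ m, ∀ i, ((p i : ℕ) : ℤ) ∣ u.c i - m := by
  have key : ∀ k, J ≤ k → u.c k = u.c J + ((p k : ℕ) : ℤ) - ((p J : ℕ) : ℤ) := by
    intro k hk
    induction k with
    | zero => have : J = 0 := by omega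
              subst this; ring
    | succ k ih =>
      have hq : ((p (k+1) : ℕ) : ℤ) = ((p k : ℕ) : ℤ) * ((q p k : ℕ) : ℤ) := by
        rw [qmul hp k]; push_cast; ring
      rcases Nat.lt_or_ge J (k+1) with h' | h'
      · have hik := ih (by omega)
        rw [dig_c_succ u k, h k (by omega), hik, hq]
        ring
      · have : J = k + 1 := by omega
        subst this; ring
  refine ⟨u.c J - ((p J : ℕ) : ℤ), fun i => ?_⟩
  rcases le_or_gt J i with h' | h'
  · rw [key i h']
    have e : u.c J + ((p i : ℕ) : ℤ) - ((p J : ℕ) : ℤ) - (u.c J - ((p J : ℕ) : ℤ))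
        = ((p i : ℕ) : ℤ) := by ring
    rw [e]
  · have h1 := dvd_sub_swap (u.compat' hp (le_of_lt h'))
    have h2 : ((p i : ℕ) : ℤ) ∣ ((p J : ℕ) : ℤ) := castdvd (pdvd hp (le_of_lt h'))
    have := h1.add h2
    have e : u.c i - u.c J + ((p J : ℕ) : ℤ) = u.c i - (u.c J - ((p J : ℕ) : ℤ)) := by ring
    rwa [e] at this

end Sum

section Greedy
open Ox Ox2

variable {p : ℕ → ℕ}

/-- the current digit-plus-carry quantity for the greedy construction. -/
noncomputable def gT (hp : FastGrowing p) (cw : NPhase p) (j : ℕ) (L : ℤ) : ℤ :=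
  dig cw j + (L + cw.c j) / ((p j : ℕ) : ℤ)

/-- greedy choice of an interior digit. -/
noncomputable def gPick (hp : FastGrowing p) (cw : NPhase p) (j : ℕ) (L : ℤ) : ℤ :=
  if gT hp cw j L % ((q p j : ℕ) : ℤ) = 0 then 1
  else if gT hp cw j L = 1 then ((q p j : ℕ) : ℤ) - 2
  else if 2 ≤ gT hp cw j L ∧ gT hp cw j L ≤ ((q p j : ℕ) : ℤ) - 1 then
    ((q p j : ℕ) : ℤ) - gT hp cw j L
  else 1

lemma gPick_range (hp : FastGrowing p) (cw : NPhase p) (j : ℕ) (L : ℤ) :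
    1 ≤ gPick hp cw j L ∧ gPick hp cw j L ≤ ((q p j : ℕ) : ℤ) - 2 := by
  have hq3 : (3 : ℤ) ≤ ((q p j : ℕ) : ℤ) := by exact_mod_cast q3 hp j
  unfold gPick
  split_ifs with h1 h2 h3
  · omega
  · omega
  · omega
  · omega

/-- the greedy interior phase values. -/
noncomputable def gC (hp : FastGrowing p) (cw : NPhase p) : ℕ → ℤ
  | 0 => 0
  | j + 1 => gC hp cw j + gPick hp cw j (gC hp cw j) * ((p j : ℕ) : ℤ)

lemma gC_range (hp : FastGrowing p) (cw : NPhase p) :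
    ∀ j, 0 ≤ gC hp cw j ∧ gC hp cw j < ((p j : ℕ) : ℤ) := by
  intro j
  induction j with
  | zero => simp [gC, hp.1]
  | succ j ih =>
    have hpj := pcast_pos hp j
    have hq : ((p (j+1) : ℕ) : ℤ) = ((p j : ℕ) : ℤ) * ((q p j : ℕ) : ℤ) := by
      rw [qmul hp j]; push_cast; ring
    have hr := gPick_range hp cw j (gC hp cw j)
    constructor
    · show 0 ≤ gC hp cw j + gPick hp cw j (gC hp cw j) * ((p j : ℕ) : ℤ)
      nlinarith
    · show gC hp cw j + gPick hp cw j (gC hp cw j) * ((p j : ℕ) : ℤ) < ((p (j+1) : ℕ) : ℤ)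
      rw [hq]
      nlinarith

/-- the greedy interior phase. -/
noncomputable def gLam (hp : FastGrowing p) (cw : NPhase p) : NPhase p where
  c := gC hp cw
  lb j := (gC_range hp cw j).1
  ub j := (gC_range hp cw j).2
  compat j := ⟨gPick hp cw j (gC hp cw j), by
    show gC hp cw j + gPick hp cw j (gC hp cw j) * ((p j : ℕ) : ℤ) - gC hp cw j = _
    ring⟩

lemma gLam_dig (hp : FastGrowing p) (cw : NPhase p) (j : ℕ) :
    dig (gLam hp cw) j = gPick hp cw j (gC hp cw j) := by
  have hpj := pcast_pos hp j
  apply mul_right_cancel₀ (b := ((p j : ℕ) : ℤ)) (ne_of_gt hpj)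
  rw [dig_mul]
  show gC hp cw j + gPick hp cw j (gC hp cw j) * ((p j : ℕ) : ℤ) - gC hp cw j = _
  ring

lemma gLam_interior (hp : FastGrowing p) (cw : NPhase p) (j : ℕ) :
    1 ≤ dig (gLam hp cw) j ∧ dig (gLam hp cw) j ≤ ((q p j : ℕ) : ℤ) - 2 := by
  rw [gLam_dig]
  exact gPick_range hp cw j _

/-- one greedy step: either the sum digit hits the boundary, or the state is blocked. -/
lemma greedy_step (hp : FastGrowing p) (cw : NPhase p) (j : ℕ) :
    (dig (psum hp (gLam hp cw) cw) j = 0 ∨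
      dig (psum hp (gLam hp cw) cw) j = ((q p j : ℕ) : ℤ) - 1) ∨
    (carry (gLam hp cw) cw (j+1) = carry (gLam hp cw) cw j ∧
      ((dig cw j = 0 ∧ carry (gLam hp cw) cw j = 0) ∨
       (dig cw j = ((q p j : ℕ) : ℤ) - 1 ∧ carry (gLam hp cw) cw j = 1))) := by
  have hq3 : (3 : ℤ) ≤ ((q p j : ℕ) : ℤ) := by exact_mod_cast q3 hp j
  set lam := gLam hp cw with hlam
  set s := psum hp lam cw with hs
  have hD0 : 0 ≤ dig cw j := dig_nonneg hp cw j
  have hD1 : dig cw j < ((q p j : ℕ) : ℤ) := dig_lt hp cw j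
  have hO := carry_zero_one hp lam cw j
  have hO' := carry_zero_one hp lam cw (j+1)
  have hS0 : 0 ≤ dig s j := dig_nonneg hp s j
  have hS1 : dig s j < ((q p j : ℕ) : ℤ) := dig_lt hp s j
  have hADD : dig s j
      = dig lam j + dig cw j + carry lam cw j - carry lam cw (j+1) * ((q p j : ℕ) : ℤ) :=
    dig_psum hp lam cw j
  have hdig : dig lam j = gPick hp cw j (gC hp cw j) := gLam_dig hp cw j
  have hTeq : gT hp cw j (gC hp cw j) = dig cw j + carry lam cw j := rfl
  set T := gT hp cw j (gC hp cw j) with hTdef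
  have hpick : gPick hp cw j (gC hp cw j)
      = if T % ((q p j : ℕ) : ℤ) = 0 then 1
        else if T = 1 then ((q p j : ℕ) : ℤ) - 2
        else if 2 ≤ T ∧ T ≤ ((q p j : ℕ) : ℤ) - 1 then ((q p j : ℕ) : ℤ) - T
        else 1 := rfl
  have hTrange : 0 ≤ T ∧ T ≤ ((q p j : ℕ) : ℤ) := by
    rw [hTeq]
    constructor <;> omega
  by_cases hmod : T % ((q p j : ℕ) : ℤ) = 0
  · -- blocked case
    have hT0 : T = 0 ∨ T = ((q p j : ℕ) : ℤ) := by
      have hdvd : ((q p j : ℕ) : ℤ) ∣ T := Int.dvd_of_emod_eq_zero hmod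
      rcases eq_or_lt_of_le hTrange.1 with h | h
      · left; omega
      · right
        have := Int.le_of_dvd h hdvd
        omega
    have hp1 : dig lam j = 1 := by rw [hdig, hpick, if_pos hmod]
    right
    rcases hT0 with h | h
    · rw [hTeq] at h
      have hO0 : carry lam cw j = 0 := by omega
      have hDj : dig cw j = 0 := by omega
      have hcar1 : carry lam cw (j+1) = 0 := by
        rcases hO' with h' | h'
        · exact h'
        · exfalso
          rw [hADD, hp1, h', hDj, hO0] at hS0
          omega
      exact ⟨by omega, Or.inl ⟨hDj, hO0⟩⟩
    · rw [hTeq] at h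
      have hO1 : carry lam cw j = 1 := by omega
      have hDj : dig cw j = ((q p j : ℕ) : ℤ) - 1 := by omega
      have hcar1 : carry lam cw (j+1) = 1 := by
        rcases hO' with h' | h'
        · exfalso
          rw [hADD, hp1, h', hDj, hO1] at hS1
          omega
        · exact h'
      exact ⟨by omega, Or.inr ⟨hDj, hO1⟩⟩
  · -- hit case
    left
    by_cases h1 : T = 1
    · have hp1 : dig lam j = ((q p j : ℕ) : ℤ) - 2 := by
        rw [hdig, hpick, if_neg hmod, if_pos h1]
      rw [hTeq] at h1
      right
      rcases hO' with h' | h' <;> rw [h', hp1] at hADD <;> simp at hADD <;> omega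
    · have h2T : 2 ≤ T ∧ T ≤ ((q p j : ℕ) : ℤ) - 1 := by
        rcases hTrange with ⟨ha, hb⟩
        constructor
        · rcases eq_or_lt_of_le ha with h | h
          · exfalso; apply hmod; rw [← h]; simp
          · omega
        · rcases eq_or_lt_of_le hb with h | h
          · exfalso; apply hmod; rw [h]; simp
          · omega
      have hp1 : dig lam j = ((q p j : ℕ) : ℤ) - T := by
        rw [hdig, hpick, if_neg hmod, if_neg h1, if_pos h2T]
      left
      rcases hO' with h' | h' <;> rw [h', hp1] at hADD <;>
        [skip; skip] <;> simp at hADD <;> rw [hTeq] at hADD <;> omega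

/-- for a non-integer phase, the greedy sum hits the boundary infinitely often. -/
lemma greedy_hits (hp : FastGrowing p) (cw : NPhase p)
    (hnon : ¬ ∃ m, ∀ i, ((p i : ℕ) : ℤ) ∣ cw.c i - m) :
    ∀ J, ∃ j, J ≤ j ∧
      (dig (psum hp (gLam hp cw) cw) j = 0 ∨
        dig (psum hp (gLam hp cw) cw) j = ((q p j : ℕ) : ℤ) - 1) := by
  intro J
  by_contra hcon
  push_neg at hcon
  have hblocked : ∀ j, J ≤ j →
      (carry (gLam hp cw) cw (j+1) = carry (gLam hp cw) cw j ∧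
        ((dig cw j = 0 ∧ carry (gLam hp cw) cw j = 0) ∨
         (dig cw j = ((q p j : ℕ) : ℤ) - 1 ∧ carry (gLam hp cw) cw j = 1))) := by
    intro j hj
    rcases greedy_step hp cw j with h | h
    · exact absurd h (by
        have := hcon j hj
        tauto)
    · exact h
  have hconst : ∀ j, J ≤ j → carry (gLam hp cw) cw j = carry (gLam hp cw) cw J := by
    intro j hj
    induction j with
    | zero => have : J = 0 := by omega
              rw [this]
    | succ j ih =>
      rcases Nat.lt_or_ge J (j+1) with h' | h'
      · rw [(hblocked j (by omega)).1, ih (by omega)]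
      · have : J = j + 1 := by omega
        rw [this]
  rcases carry_zero_one hp (gLam hp cw) cw J with hc | hc
  · apply hnon
    apply int_of_tail_zero hp cw J
    intro j hj
    rcases (hblocked j hj).2 with ⟨h1, _⟩ | ⟨_, h2⟩
    · exact h1
    · rw [hconst j hj] at h2
      omega
  · apply hnon
    apply int_of_tail_max hp cw J
    intro j hj
    rcases (hblocked j hj).2 with ⟨_, h2⟩ | ⟨h1, _⟩
    · rw [hconst j hj] at h2
      omega
    · exact h1

end Greedy

section Tail
open Ox Ox2

variable {p : ℕ → ℕ}

/-- digits of an integer translate of a non-integer phase eventually agree with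
the digits of the phase. -/
lemma tail_digits (hp : FastGrowing p) (s : NPhase p) (n : ℤ)
    (hnon : ¬ ∃ m, ∀ i, ((p i : ℕ) : ℤ) ∣ s.c i - m) :
    ∃ J, ∀ j, J ≤ j → dig (psum hp (intPhase hp n) s) j = dig s j := by
  obtain ⟨J₀, hJ₀⟩ := plarge hp n.natAbs
  set u := intPhase hp n with hu
  set t := psum hp u s with ht
  have habs : ∀ j, J₀ ≤ j → (n < ((p j : ℕ) : ℤ) ∧ -((p j : ℕ) : ℤ) ≤ n) := by
    intro j hj
    have h1 : (n.natAbs : ℤ) < ((p J₀ : ℕ) : ℤ) := by exact_mod_cast hJ₀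
    have h2 : ((p J₀ : ℕ) : ℤ) ≤ ((p j : ℕ) : ℤ) := by exact_mod_cast pmono hp hj
    rcases Int.natAbs_eq n with h | h <;> omega
  rcases le_or_gt 0 n with hn | hn
  · -- nonnegative case
    have hdigu : ∀ j, J₀ ≤ j → dig u j = 0 := by
      intro j hj
      exact dig_intPhase_of_nonneg hp hn (habs j hj).1
    have hcl : ∃ j₁, J₀ ≤ j₁ ∧ carry u s (j₁ + 1) = 0 := by
      by_contra hc
      push_neg at hc
      have hone : ∀ j, J₀ ≤ j → carry u s (j+1) = 1 := by
        intro j hj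
        rcases carry_zero_one hp u s (j+1) with h | h
        · exact absurd h (hc j hj)
        · exact h
      apply hnon
      apply int_of_tail_max hp s (J₀ + 1)
      intro j hj
      have hADD := dig_psum hp u s j
      rw [← ht] at hADD
      have h1 := hone j (by omega)
      have h2 := hone (j-1) (by omega)
      have h2' : carry u s j = 1 := by
        have e : j - 1 + 1 = j := by omega
        rwa [e] at h2
      have h3 := hdigu j (by omega)
      have h4 := dig_nonneg hp t j
      have h5 := dig_lt hp s j
      rw [h1, h3, h2'] at hADD
      simp at hADD
      omega
    obtain ⟨j₁, hj₁, hcz⟩ := hcl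
    have key : ∀ k, carry u s (j₁ + 1 + k) = 0 ∧
        (∀ j, j₁ + 1 ≤ j → j ≤ j₁ + k → dig t j = dig s j) := by
      intro k
      induction k with
      | zero => exact ⟨hcz, fun j h1 h2 => by omega⟩
      | succ k ih =>
        obtain ⟨ihc, ihd⟩ := ih
        have hADD := dig_psum hp u s (j₁ + 1 + k)
        rw [← ht] at hADD
        have h3 := hdigu (j₁ + 1 + k) (by omega)
        have h4 := dig_nonneg hp t (j₁ + 1 + k)
        have h5 := dig_lt hp s (j₁ + 1 + k)
        have h6 := dig_nonneg hp s (j₁ + 1 + k)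
        rw [h3, ihc] at hADD
        simp at hADD
        have hq3 : (3:ℤ) ≤ ((q p (j₁ + 1 + k) : ℕ) : ℤ) := by
          exact_mod_cast q3 hp (j₁ + 1 + k)
        have hnext : carry u s (j₁ + 1 + k + 1) = 0 := by
          rcases carry_zero_one hp u s (j₁ + 1 + k + 1) with h | h
          · exact h
          · exfalso
            rw [h] at hADD
            simp at hADD
            omega
        rw [hnext] at hADD
        simp at hADD
        constructor
        · have e : j₁ + 1 + (k + 1) = j₁ + 1 + k + 1 := by omega
          rw [e]
          exact hnext
        · intro j hj1 hj2
          rcases Nat.lt_or_ge j (j₁ + 1 + k) with h' | h'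
          · exact ihd j hj1 (by omega)
          · have : j = j₁ + 1 + k := by omega
            rw [this]
            exact hADD
    refine ⟨j₁ + 1, fun j hj => ?_⟩
    exact (key (j - j₁)).2 j hj (by omega)
  · -- negative case
    have hdigu : ∀ j, J₀ ≤ j → dig u j = ((q p j : ℕ) : ℤ) - 1 := by
      intro j hj
      exact dig_intPhase_of_neg hp hn (by have := (habs j hj).2; omega)
    have hcl : ∃ j₁, J₀ ≤ j₁ ∧ carry u s (j₁ + 1) = 1 := by
      by_contra hc
      push_neg at hc
      have hone : ∀ j, J₀ ≤ j → carry u s (j+1) = 0 := by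
        intro j hj
        rcases carry_zero_one hp u s (j+1) with h | h
        · exact h
        · exact absurd h (hc j hj)
      apply hnon
      apply int_of_tail_zero hp s (J₀ + 1)
      intro j hj
      have hADD := dig_psum hp u s j
      rw [← ht] at hADD
      have h1 := hone j (by omega)
      have h2 := hone (j-1) (by omega)
      have h2' : carry u s j = 0 := by
        have e : j - 1 + 1 = j := by omega
        rwa [e] at h2
      have h3 := hdigu j (by omega)
      have h4 := dig_lt hp t j
      have h5 := dig_nonneg hp s j
      rw [h1, h3, h2'] at hADD
      simp at hADD
      omega
    obtain ⟨j₁, hj₁, hcz⟩ := hcl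
    have key : ∀ k, carry u s (j₁ + 1 + k) = 1 ∧
        (∀ j, j₁ + 1 ≤ j → j ≤ j₁ + k → dig t j = dig s j) := by
      intro k
      induction k with
      | zero => exact ⟨hcz, fun j h1 h2 => by omega⟩
      | succ k ih =>
        obtain ⟨ihc, ihd⟩ := ih
        have hADD := dig_psum hp u s (j₁ + 1 + k)
        rw [← ht] at hADD
        have h3 := hdigu (j₁ + 1 + k) (by omega)
        have h4 := dig_nonneg hp t (j₁ + 1 + k)
        have h5 := dig_lt hp t (j₁ + 1 + k)
        have h6 := dig_lt hp s (j₁ + 1 + k)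
        have h7 := dig_nonneg hp s (j₁ + 1 + k)
        rw [h3, ihc] at hADD
        have hq3 : (3:ℤ) ≤ ((q p (j₁ + 1 + k) : ℕ) : ℤ) := by
          exact_mod_cast q3 hp (j₁ + 1 + k)
        have hnext : carry u s (j₁ + 1 + k + 1) = 1 := by
          rcases carry_zero_one hp u s (j₁ + 1 + k + 1) with h | h
          · exfalso
            rw [h] at hADD
            simp at hADD
            omega
          · exact h
        rw [hnext] at hADD
        simp at hADD
        constructor
        · have e : j₁ + 1 + (k + 1) = j₁ + 1 + k + 1 := by omega
          rw [e]
          exact hnext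
        · intro j hj1 hj2
          rcases Nat.lt_or_ge j (j₁ + 1 + k) with h' | h'
          · exact ihd j hj1 (by omega)
          · have : j = j₁ + 1 + k := by omega
            rw [this]
            omega
    refine ⟨j₁ + 1, fun j hj => ?_⟩
    exact (key (j - j₁)).2 j hj (by omega)

end Tail

section HoleFree
open Ox Ox2

variable {p : ℕ → ℕ}

lemma emod_sub_dvd (P a : ℤ) : P ∣ a % P - a :=
  ⟨-(a / P), by rw [Int.emod_def]; ring⟩

lemma dig_ext {u v : NPhase p} (h : ∀ i, u.c i = v.c i) (j : ℕ) : dig u j = dig v j := by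
  unfold dig
  rw [h j, h (j+1)]

/-- key arithmetic lemma: if `cw` is a non-integer phase and `lam` is the greedy
interior phase for it, then for every integer `n` the phase `n + lam + cw` meets
a defined set. -/
lemma hole_free (hp : FastGrowing p) (cw : NPhase p)
    (hnon : ¬ ∃ m, ∀ i, ((p i : ℕ) : ℤ) ∣ cw.c i - m) (n : ℤ) :
    ∃ i, (n + (gLam hp cw).c i + cw.c i) ∈ oxDefined p i := by
  set lam := gLam hp cw with hlam
  set s := psum hp lam cw with hsdef
  set t := psum hp (intPhase hp n) s with htdef
  have hcong : ∀ i, ((p i : ℕ) : ℤ) ∣ t.c i - (n + lam.c i + cw.c i) := by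
    intro i
    have h1 : t.c i = ((intPhase hp n).c i + s.c i) % ((p i : ℕ) : ℤ) := rfl
    have h2 : s.c i = (lam.c i + cw.c i) % ((p i : ℕ) : ℤ) := rfl
    have d1 : ((p i : ℕ) : ℤ) ∣ t.c i - ((intPhase hp n).c i + s.c i) := by
      rw [h1]; exact emod_sub_dvd _ _
    have d2 : ((p i : ℕ) : ℤ) ∣ (intPhase hp n).c i - n := intPhase_dvd hp n i
    have d3 : ((p i : ℕ) : ℤ) ∣ s.c i - (lam.c i + cw.c i) := by
      rw [h2]; exact emod_sub_dvd _ _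
    have := (d1.add d2).add d3
    have e : t.c i - ((intPhase hp n).c i + s.c i) + ((intPhase hp n).c i - n)
        + (s.c i - (lam.c i + cw.c i)) = t.c i - (n + lam.c i + cw.c i) := by ring
    rwa [e] at this
  have hbdry : ∃ j, dig t j = 0 ∨ dig t j = ((q p j : ℕ) : ℤ) - 1 := by
    by_cases hsint : ∃ m, ∀ i, ((p i : ℕ) : ℤ) ∣ s.c i - m
    · -- the sum is an integer phase
      obtain ⟨m, hm⟩ := hsint
      have htm : ∀ i, ((p i : ℕ) : ℤ) ∣ t.c i - (n + m) := by
        intro i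
        have h1 : t.c i = ((intPhase hp n).c i + s.c i) % ((p i : ℕ) : ℤ) := rfl
        have d1 : ((p i : ℕ) : ℤ) ∣ t.c i - ((intPhase hp n).c i + s.c i) := by
          rw [h1]; exact emod_sub_dvd _ _
        have d2 : ((p i : ℕ) : ℤ) ∣ (intPhase hp n).c i - n := intPhase_dvd hp n i
        have := (d1.add d2).add (hm i)
        have e : t.c i - ((intPhase hp n).c i + s.c i) + ((intPhase hp n).c i - n)
            + (s.c i - m) = t.c i - (n + m) := by ring
        rwa [e] at this
      have hteq : ∀ i, t.c i = (intPhase hp (n + m)).c i := eq_intPhase hp t (n + m) htm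
      obtain ⟨J₀, hJ₀⟩ := plarge hp (n + m).natAbs
      have h1 : ((n+m).natAbs : ℤ) < ((p J₀ : ℕ) : ℤ) := by exact_mod_cast hJ₀
      refine ⟨J₀, ?_⟩
      rw [dig_ext hteq J₀]
      rcases le_or_gt 0 (n + m) with hnm | hnm
      · left
        apply dig_intPhase_of_nonneg hp hnm
        rcases Int.natAbs_eq (n+m) with h | h <;> omega
      · right
        apply dig_intPhase_of_neg hp hnm
        rcases Int.natAbs_eq (n+m) with h | h <;> omega
    · obtain ⟨J, hJ⟩ := tail_digits hp s n hsint
      obtain ⟨j, hj1, hj2⟩ := greedy_hits hp cw hnon J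
      exact ⟨j, by rw [hJ j hj1]; exact hj2⟩
  obtain ⟨j, hj⟩ := hbdry
  refine ⟨j + 1, ?_⟩
  have hmem : t.c (j+1) ∈ oxDefined p (j+1) := mem_of_dig_boundary hp t j hj
  exact (mem_congr hp (hcong (j+1))).mp hmem

end HoleFree

section Dyn
open Ox Ox2

variable {p : ℕ → ℕ} {X : Type*}

lemma shiftZ_shiftZ (a b : ℤ) (z : ℤ → X) : shiftZ a (shiftZ b z) = shiftZ (a + b) z := by
  funext n
  show z (n + a + b) = z (n + (a + b))
  rw [add_assoc]

lemma shiftZ_zero (z : ℤ → X) : shiftZ 0 z = z := by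
  funext n
  show z (n + 0) = z n
  rw [add_zero]

section Topo

variable [TopologicalSpace X]

lemma shiftZ_mem_orbit (m : ℤ) (z : ℤ → X) : shiftZ m z ∈ orbitClosure z :=
  subset_closure ⟨m, rfl⟩

lemma self_mem_orbitClosure (z : ℤ → X) : z ∈ orbitClosure z := by
  have := shiftZ_mem_orbit 0 z
  rwa [shiftZ_zero] at this

lemma shiftZ_mem_orbitClosure {z v : ℤ → X} (m : ℤ) (hv : v ∈ orbitClosure z) :
    shiftZ m v ∈ orbitClosure z := by
  have hc : Continuous (shiftZ m : (ℤ → X) → (ℤ → X)) :=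
    continuous_pi fun n => continuous_apply (n + m)
  have hmt : Set.MapsTo (shiftZ m) {y : ℤ → X | ∃ k : ℤ, y = shiftZ k z}
      {y : ℤ → X | ∃ k : ℤ, y = shiftZ k z} := by
    rintro y ⟨k, rfl⟩
    exact ⟨m + k, (shiftZ_shiftZ m k z)⟩
  exact map_mem_closure hc hv hmt

/-- a conjugacy commutes with all shifts. -/
lemma conj_shiftZ {A B : Set (ℤ → X)} {f : (ℤ → X) → (ℤ → X)} {z : ℤ → X}
    (hA : A = orbitClosure z) (hf : IsConjugacy A B f) :
    ∀ (m : ℤ), ∀ a ∈ A, f (shiftZ m a) = shiftZ m (f a) := by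
  obtain ⟨-, -, ⟨g, -, -, hgf, -⟩, hcomm⟩ := hf
  have hmemA : ∀ (m : ℤ), ∀ a ∈ A, shiftZ m a ∈ A := by
    intro m a ha
    rw [hA] at ha ⊢
    exact shiftZ_mem_orbitClosure m ha
  intro m
  induction m using Int.induction_on with
  | zero => intro a ha; rw [shiftZ_zero, shiftZ_zero]
  | succ n ih =>
    intro a ha
    have h1 : shiftZ ((n : ℤ) + 1) a = shiftZ 1 (shiftZ n a) := by
      rw [shiftZ_shiftZ]; ring_nf
    rw [h1, hcomm _ (hmemA n a ha), ih a ha, shiftZ_shiftZ]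
    ring_nf
  | pred n ih =>
    intro a ha
    have hb : shiftZ (-(n : ℤ) - 1) a ∈ A := hmemA _ a ha
    have h1 : shiftZ 1 (shiftZ (-(n : ℤ) - 1) a) = shiftZ (-(n : ℤ)) a := by
      rw [shiftZ_shiftZ]; ring_nf
    have h2 : f (shiftZ (-(n : ℤ)) a) = shiftZ (-(n : ℤ)) (f a) := ih a ha
    have h3 := hcomm _ hb
    rw [h1, h2] at h3
    have h4 : shiftZ (-(n:ℤ) - 1) (f a) = f (shiftZ (-(n:ℤ) - 1) a) := by
      have h5 := congrArg (shiftZ (-1)) h3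
      rw [shiftZ_shiftZ, shiftZ_shiftZ] at h5
      have e1 : (-1 : ℤ) + -(n:ℤ) = -(n:ℤ) - 1 := by ring
      have e2 : (-1 : ℤ) + 1 = 0 := by ring
      rw [e1, e2, shiftZ_zero] at h5
      exact h5
    exact h4.symm

/-- every point of the orbit closure is an ultrafilter limit of shifts. -/
lemma exists_ultra (z : ℤ → X) {w : ℤ → X} (hw : w ∈ orbitClosure z) :
    ∃ W : Ultrafilter ℤ, Tendsto (fun m => shiftZ m z) W (𝓝 w) := by
  set φ : ℤ → (ℤ → X) := fun m => shiftZ m z with hφ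
  have hNB : (Filter.comap φ (𝓝 w)).NeBot := by
    rw [Filter.comap_neBot_iff]
    intro t ht
    obtain ⟨y, hy1, hy2⟩ := mem_closure_iff_nhds.mp hw t ht
    obtain ⟨m, rfl⟩ := hy2
    exact ⟨m, hy1⟩
  refine ⟨Ultrafilter.of (Filter.comap φ (𝓝 w)), ?_⟩
  calc Filter.map φ (Ultrafilter.of (Filter.comap φ (𝓝 w)))
      ≤ Filter.map φ (Filter.comap φ (𝓝 w)) := Filter.map_mono (Ultrafilter.of_le _)
    _ ≤ 𝓝 w := Filter.map_comap_le

end Topo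

/-- extraction of a phase from an ultrafilter on `ℤ`. -/
lemma phase_of_ultra (hp : FastGrowing p) (W : Ultrafilter ℤ) :
    ∃ cw : NPhase p, ∀ i, {m : ℤ | m % ((p i : ℕ) : ℤ) = cw.c i} ∈ W := by
  have key : ∀ i : ℕ, ∃ t : ℤ, 0 ≤ t ∧ t < ((p i : ℕ) : ℤ) ∧
      {m : ℤ | m % ((p i : ℕ) : ℤ) = t} ∈ W := by
    intro i
    have hpi := pcast_pos hp i
    set V := W.map (fun m : ℤ => m % ((p i : ℕ) : ℤ)) with hV
    have hmem : Set.Icc (0:ℤ) (((p i : ℕ) : ℤ) - 1) ∈ V := by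
      rw [hV, Ultrafilter.mem_map]
      have : (fun m : ℤ => m % ((p i : ℕ) : ℤ)) ⁻¹'
          Set.Icc (0:ℤ) (((p i : ℕ) : ℤ) - 1) = Set.univ := by
        ext m
        simp only [Set.mem_preimage, Set.mem_Icc, Set.mem_univ, iff_true]
        have h1 := Int.emod_nonneg m (ne_of_gt hpi)
        have h2 := Int.emod_lt_of_pos m hpi
        omega
      rw [this]
      exact Filter.univ_mem
    obtain ⟨t, ht, hpure⟩ :=
      Ultrafilter.eq_pure_of_finite_mem (Set.finite_Icc _ _) hmem
    refine ⟨t, (Set.mem_Icc.mp ht).1, by have := (Set.mem_Icc.mp ht).2; omega, ?_⟩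
    have : {t} ∈ V := by rw [hpure]; exact Filter.mem_pure.mpr rfl
    rw [hV, Ultrafilter.mem_map] at this
    convert this using 1
    rfl
  choose c hc1 hc2 hc3 using key
  refine ⟨⟨c, hc1, hc2, ?_⟩, hc3⟩
  intro i
  have hint := (W.toFilter.inter_mem (hc3 i) (hc3 (i+1)))
  obtain ⟨m, hm1, hm2⟩ := Ultrafilter.nonempty_of_mem hint
  have d1 : ((p (i+1) : ℕ) : ℤ) ∣ c (i+1) - m := by
    rw [← hm2]; exact emod_sub_dvd _ _
  have d1' : ((p i : ℕ) : ℤ) ∣ c (i+1) - m := (castdvd (hp.2.1 i)).trans d1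
  have d2 : ((p i : ℕ) : ℤ) ∣ m - c i := by
    rw [← hm1]
    exact dvd_sub_swap (emod_sub_dvd _ _)
  have := d1'.add d2
  have e : c (i+1) - m + (m - c i) = c (i+1) - c i := by ring
  rwa [e] at this

end Dyn

section Eval
open Ox Ox2

variable {p : ℕ → ℕ} {X : Type*} [MetricSpace X]

/-- evaluation of an ultrafilter limit of shifts of an Oxtoby sequence at a position
where the phase meets a defined set. -/
lemma eval_w (hp : FastGrowing p) (x' : ℕ → X) {w : ℤ → X} {W : Ultrafilter ℤ}
    (htend : Tendsto (fun m => shiftZ m (oxtoby p x')) W (𝓝 w))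
    {cw : NPhase p} (hcw : ∀ i, {m : ℤ | m % ((p i : ℕ) : ℤ) = cw.c i} ∈ W)
    {n : ℤ} {i : ℕ} (hmem : n + cw.c i ∈ oxDefined p i) :
    w n = oxtoby p x' (n + cw.c i) := by
  have h1 : Tendsto (fun m : ℤ => oxtoby p x' (n + m)) W (𝓝 (w n)) :=
    ((continuous_apply n).tendsto w).comp htend
  have h3 : ∀ᶠ m in (W : Filter ℤ),
      oxtoby p x' (n + m) = oxtoby p x' (n + cw.c i) := by
    filter_upwards [hcw i] with m hm
    apply oxtoby_congr hp x' _ hmem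
    have d : ((p i : ℕ) : ℤ) ∣ m - cw.c i := by
      rw [← hm]
      exact dvd_sub_swap (emod_sub_dvd _ _)
    have e : (n + m) - (n + cw.c i) = m - cw.c i := by ring
    rw [e]
    exact d
  have h4 : Tendsto (fun m : ℤ => oxtoby p x' (n + m)) W
      (𝓝 (oxtoby p x' (n + cw.c i))) :=
    Filter.Tendsto.congr' (Filter.EventuallyEq.symm h3) tendsto_const_nhds
  exact tendsto_nhds_unique h1 h4

variable [CompactSpace X]

lemma limit_point (z : ℤ → X) (msq : ℕ → ℤ) :
    ∃ v : ℤ → X, Tendsto (fun j => shiftZ (msq j) z) (Filter.hyperfilter ℕ) (𝓝 v) := by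
  set F := Ultrafilter.map (fun j => shiftZ (msq j) z) (Filter.hyperfilter ℕ) with hF
  have hle : (F : Filter (ℤ → X)) ≤ Filter.principal Set.univ :=
    le_principal_iff.mpr Filter.univ_mem
  obtain ⟨v, -, hv⟩ := isCompact_univ.ultrafilter_le_nhds F hle
  exact ⟨v, hv⟩

lemma limit_mem {z v : ℤ → X} {msq : ℕ → ℤ}
    (hv : Tendsto (fun j => shiftZ (msq j) z) (Filter.hyperfilter ℕ) (𝓝 v)) :
    v ∈ orbitClosure z := by
  have hcl : IsClosed (orbitClosure z) := isClosed_closure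
  exact hcl.mem_of_tendsto hv (Filter.Eventually.of_forall fun j => shiftZ_mem_orbit _ z)

/-- the central computation: the value of the image of an ultrafilter limit point
under the conjugacy. -/
lemma image_eval (hp : FastGrowing p) (x x' : ℕ → X)
    {f : (ℤ → X) → (ℤ → X)}
    (hf : IsConjugacy (orbitClosure (oxtoby p x)) (orbitClosure (oxtoby p x')) f)
    {W : Ultrafilter ℤ}
    (htend : Tendsto (fun m => shiftZ m (oxtoby p x')) W (𝓝 (f (oxtoby p x))))
    {cw : NPhase p} (hcw : ∀ i, {m : ℤ | m % ((p i : ℕ) : ℤ) = cw.c i} ∈ W)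
    (lam : NPhase p) (msq : ℕ → ℤ)
    (hphase : ∀ i, ∀ᶠ j in Filter.atTop, ((p i : ℕ) : ℤ) ∣ msq j - lam.c i)
    {v : ℤ → X}
    (hv : Tendsto (fun j => shiftZ (msq j) (oxtoby p x)) (Filter.hyperfilter ℕ) (𝓝 v))
    (n : ℤ) (i : ℕ) (hmem : (n + lam.c i + cw.c i) ∈ oxDefined p i) :
    f v n = oxtoby p x' (n + lam.c i + cw.c i) := by
  have hvA : v ∈ orbitClosure (oxtoby p x) := limit_mem hv
  have h1 : Tendsto (fun j => shiftZ (msq j) (oxtoby p x)) (Filter.hyperfilter ℕ)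
      (𝓝[orbitClosure (oxtoby p x)] v) :=
    tendsto_nhdsWithin_iff.mpr
      ⟨hv, Filter.Eventually.of_forall fun j => shiftZ_mem_orbit _ _⟩
  have h2 : Tendsto f (𝓝[orbitClosure (oxtoby p x)] v) (𝓝 (f v)) := hf.2.1 v hvA
  have h3 : Tendsto (fun j => f (shiftZ (msq j) (oxtoby p x))) (Filter.hyperfilter ℕ)
      (𝓝 (f v)) := h2.comp h1
  have h4 : Tendsto (fun j => shiftZ (msq j) (f (oxtoby p x))) (Filter.hyperfilter ℕ)
      (𝓝 (f v)) :=
    h3.congr fun j =>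
      conj_shiftZ rfl hf (msq j) (oxtoby p x) (self_mem_orbitClosure _)
  have h5 : Tendsto (fun j => f (oxtoby p x) (n + msq j)) (Filter.hyperfilter ℕ)
      (𝓝 (f v n)) := ((continuous_apply n).tendsto (f v)).comp h4
  have h6 : ∀ᶠ j in (Filter.hyperfilter ℕ : Filter ℕ),
      f (oxtoby p x) (n + msq j) = oxtoby p x' (n + lam.c i + cw.c i) := by
    have hph := (hphase i).filter_mono Nat.hyperfilter_le_atTop
    filter_upwards [hph] with j hj
    have hd : ((p i : ℕ) : ℤ) ∣ (n + msq j + cw.c i) - (n + lam.c i + cw.c i) := by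
      have e : (n + msq j + cw.c i) - (n + lam.c i + cw.c i) = msq j - lam.c i := by
        ring
      rw [e]
      exact hj
    have hmem2 : (n + msq j) + cw.c i ∈ oxDefined p i := by
      have e2 : n + msq j + cw.c i = (n + msq j) + cw.c i := by ring
      exact (mem_congr hp hd).mpr hmem
    have e1 : f (oxtoby p x) (n + msq j) = oxtoby p x' ((n + msq j) + cw.c i) :=
      eval_w hp x' htend hcw hmem2
    rw [e1]
    exact oxtoby_congr hp x' hd hmem
  exact tendsto_nhds_unique h5
    (Filter.Tendsto.congr' (Filter.EventuallyEq.symm h6) tendsto_const_nhds)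

end Eval

section Main
open Ox Ox2

theorem oxtoby_conjugacy_sends_base_to_shift' {X : Type*} [MetricSpace X] [CompactSpace X]
    (x x' : ℕ → X) (p : ℕ → ℕ) (hp : FastGrowing p)
    (hL : (omegaLimitSet x).Nontrivial) (hL' : (omegaLimitSet x').Nontrivial)
    (f : (ℤ → X) → (ℤ → X))
    (hf : IsConjugacy (orbitClosure (oxtoby p x)) (orbitClosure (oxtoby p x')) f) :
    ∃ m : ℤ, f (oxtoby p x) = shiftZ m (oxtoby p x') := by
  have hzA : oxtoby p x ∈ orbitClosure (oxtoby p x) := self_mem_orbitClosure _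
  have hwB : f (oxtoby p x) ∈ orbitClosure (oxtoby p x') := hf.1 hzA
  obtain ⟨W, hWt⟩ := exists_ultra (oxtoby p x') hwB
  obtain ⟨cw, hcw⟩ := phase_of_ultra hp W
  by_cases hint : ∃ m, ∀ i, ((p i : ℕ) : ℤ) ∣ cw.c i - m
  · -- integer phase: the image is the corresponding shift
    obtain ⟨m, hm⟩ := hint
    refine ⟨m, funext fun n => ?_⟩
    obtain ⟨i, hi⟩ := total hp (n + m)
    have hd : ((p i : ℕ) : ℤ) ∣ (n + cw.c i) - (n + m) := by
      have e : (n + cw.c i) - (n + m) = cw.c i - m := by ring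
      rw [e]
      exact hm i
    have hmem : n + cw.c i ∈ oxDefined p i := (mem_congr hp hd).mpr hi
    have h1 : f (oxtoby p x) n = oxtoby p x' (n + cw.c i) := eval_w hp x' hWt hcw hmem
    rw [h1]
    exact oxtoby_congr hp x' hd hi
  · -- non-integer phase: contradiction with nontriviality of the limit set
    exfalso
    obtain ⟨a, ha, b, hb, hab⟩ := hL
    obtain ⟨φa, hφa, hxa⟩ := ha
    obtain ⟨φb, hφb, hxb⟩ := hb
    set lam := gLam hp cw with hlam
    have hmemDef : ∀ i, lam.c i ∈ oxDefined p (i+1) := by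
      intro i
      rw [oxDefined_eq hp]
      refine ⟨i, by omega, ?_⟩
      unfold Bd
      left
      rw [Int.ediv_eq_zero_of_lt (lam.lb i) (lam.ub i)]
      exact dvd_zero _
    have hlev : ∀ i, lev p (lam.c i) = i + 1 := fun i =>
      lev_eq_of hp (hmemDef i) (not_mem_of_interior hp lam (gLam_interior hp cw) i)
    have build : ∀ φ : ℕ → ℕ, StrictMono φ → ∀ c : X, Tendsto (x ∘ φ) atTop (𝓝 c) →
        ∃ v : ℤ → X, (∀ n : ℤ, ∀ i : ℕ, (n + lam.c i + cw.c i) ∈ oxDefined p i →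
            f v n = oxtoby p x' (n + lam.c i + cw.c i)) ∧ v 0 = c ∧
            v ∈ orbitClosure (oxtoby p x) := by
      intro φ hφ c hxc
      set msq : ℕ → ℤ := fun j => lam.c (φ (j+1) - 1) with hmsq
      obtain ⟨v, hv⟩ := limit_point (oxtoby p x) msq
      have hphase : ∀ i, ∀ᶠ j in Filter.atTop, ((p i : ℕ) : ℤ) ∣ msq j - lam.c i := by
        intro i
        rw [Filter.eventually_atTop]
        refine ⟨i, fun j hj => ?_⟩
        apply lam.compat' hp
        have h := hφ.le_apply (x := j + 1)
        omega
      refine ⟨v, fun n i hmem => image_eval hp x x' hf hWt hcw lam msq hphase hv n i hmem,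
        ?_, limit_mem hv⟩
      have h1 : Tendsto (fun j => oxtoby p x ((0:ℤ) + msq j)) (Filter.hyperfilter ℕ)
          (𝓝 (v 0)) := ((continuous_apply (0:ℤ)).tendsto v).comp hv
      have h2 : ∀ j, oxtoby p x ((0:ℤ) + msq j) = x (φ (j+1)) := by
        intro j
        rw [zero_add]
        show x (lev p (lam.c (φ (j+1) - 1))) = x (φ (j+1))
        rw [hlev (φ (j+1) - 1)]
        congr 1
        have h := hφ.le_apply (x := j + 1)
        omega
      have h3 : Tendsto (fun j => x (φ (j+1))) (Filter.hyperfilter ℕ) (𝓝 c) :=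
        (hxc.comp (tendsto_add_atTop_nat 1)).mono_left Nat.hyperfilter_le_atTop
      exact tendsto_nhds_unique (h1.congr h2) h3
    obtain ⟨va, hva_eval, hva0, hvaA⟩ := build φa hφa a hxa
    obtain ⟨vb, hvb_eval, hvb0, hvbA⟩ := build φb hφb b hxb
    have hfeq : f va = f vb := by
      funext n
      obtain ⟨i, hmem⟩ := hole_free hp cw hint n
      rw [hva_eval n i hmem, hvb_eval n i hmem]
    obtain ⟨g, -, -, hgf, -⟩ := hf.2.2.1
    have hvab : va = vb := by
      have h1 := hgf va hvaA
      have h2 := hgf vb hvbA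
      rw [← h1, ← h2, hfeq]
    apply hab
    rw [← hva0, ← hvb0, hvab]

end Main

end Ox3

/-- Theorem `Main1`: if `L((x_i))` and `L((x'_i))` both have at least two
points, then any conjugacy between the corresponding Oxtoby systems maps the Oxtoby
sequence `z` to a shift of the Oxtoby sequence `z'`. -/
theorem oxtoby_conjugacy_sends_base_to_shift {X : Type*} [MetricSpace X] [CompactSpace X]
    (x x' : ℕ → X) (p : ℕ → ℕ) (hp : FastGrowing p)
    (hL : (omegaLimitSet x).Nontrivial) (hL' : (omegaLimitSet x').Nontrivial)
    (f : (ℤ → X) → (ℤ → X))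
    (hf : IsConjugacy (orbitClosure (oxtoby p x)) (orbitClosure (oxtoby p x')) f) :
    ∃ m : ℤ, f (oxtoby p x) = shiftZ m (oxtoby p x') := by
  exact Ox3.oxtoby_conjugacy_sends_base_to_shift' x x' p hp hL hL' f hf
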